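/- Fix an integer t ≥ 2. For every sequence of integers (i_n) indexed by n with t+2 ≤ i_n ≤ n−t−2 and i_n + t even for each n, the even-weight-subcode miscorrection probability satisfies lim_{n→∞} n·Q̃_n(i_n) = 1/(t−1)!, i.e., Q̃_n(i) = (1/((t−1)!·n))·(1+o(1)) when i+t is even. -/

import Mathlib

open Finset Filter

/-- `ℓ(i,δ,j) = i − δ + 2j + 1` (natural subtraction; the defining ranges guarantee
`i ≥ δ` wherever this is used). -/
def ell (i δ j : ℕ) : ℕ := i - δ + 2 * j + 1

/-- `V(n,i,δ,j) = C(ℓ, ℓ−j)·C(n−ℓ−1, δ−1−j)/C(n−1,i)`. -/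
noncomputable def V (n i δ j : ℕ) : ℝ :=
  (Nat.choose (ell i δ j) (ell i δ j - j) : ℝ) *
    (Nat.choose (n - ell i δ j - 1) (δ - 1 - j) : ℝ) / (Nat.choose (n - 1) i : ℝ)

/-- Binomial approximation `Â_l = (n+1)^{−t}·C(n,l)`. -/
noncomputable def Ahat (t n l : ℕ) : ℝ :=
  ((n : ℝ) + 1) ^ (-(t : ℤ)) * (Nat.choose n l : ℝ)

/-- Approximate weight distribution of the even-weight subcode:
`Ã_l = (n+1)^{−t}·C(n,l)` for even `l`, and `Ã_l = 0` for odd `l`. -/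
noncomputable def Atil (t n l : ℕ) : ℝ :=
  if l % 2 = 0 then Ahat t n l else 0

/-- `Q̃_n(i)`: probability that a bit decoded by bounded-distance decoding of the
even-weight subcode becomes erroneous given it was initially correct and `i` of
the other `n−1` positions are in error. -/
noncomputable def Qtil (t n i : ℕ) : ℝ :=
  if i ≤ t + 1 then 0
  else
    ∑ δ ∈ Icc 1 t, ∑ j ∈ range δ,
      (((ell i δ j : ℝ) + 1) / (n : ℝ)) * Atil t n (ell i δ j + 1) * V n i δ j

lemma key (p a j r : ℕ) :
    (Nat.choose (p+a+2*j+r+1) (p+2*j+1) : ℝ) * (Nat.choose (p+2*j+1) (p+j+1) : ℝ) *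
      (Nat.choose (a+r) a : ℝ)
    = (Nat.choose (p+a+j+1) a : ℝ) * (Nat.choose (j+r) j : ℝ) *
      (Nat.choose (p+a+2*j+r+1) (p+a+j+1) : ℝ) := by
  rw [Nat.cast_choose ℝ (by omega : p+2*j+1 ≤ p+a+2*j+r+1),
    Nat.cast_choose ℝ (by omega : p+j+1 ≤ p+2*j+1),
    Nat.cast_choose ℝ (by omega : a ≤ a+r),
    Nat.cast_choose ℝ (by omega : a ≤ p+a+j+1),
    Nat.cast_choose ℝ (by omega : j ≤ j+r),
    Nat.cast_choose ℝ (by omega : p+a+j+1 ≤ p+a+2*j+r+1),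
    show p+a+2*j+r+1 - (p+2*j+1) = a+r from by omega,
    show p+2*j+1 - (p+j+1) = j from by omega,
    show a+r-a = r from by omega,
    show p+a+j+1-a = p+j+1 from by omega,
    show j+r-j = r from by omega,
    show p+a+2*j+r+1 - (p+a+j+1) = j+r from by omega]
  have h1 : ((p+2*j+1).factorial : ℝ) ≠ 0 := Nat.cast_ne_zero.2 (Nat.factorial_ne_zero _)
  have h2 : ((a+r).factorial : ℝ) ≠ 0 := Nat.cast_ne_zero.2 (Nat.factorial_ne_zero _)
  have h3 : ((p+j+1).factorial : ℝ) ≠ 0 := Nat.cast_ne_zero.2 (Nat.factorial_ne_zero _)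
  have h4 : ((j:ℕ).factorial : ℝ) ≠ 0 := Nat.cast_ne_zero.2 (Nat.factorial_ne_zero _)
  have h5 : ((a:ℕ).factorial : ℝ) ≠ 0 := Nat.cast_ne_zero.2 (Nat.factorial_ne_zero _)
  have h6 : ((r:ℕ).factorial : ℝ) ≠ 0 := Nat.cast_ne_zero.2 (Nat.factorial_ne_zero _)
  have h7 : ((p+a+j+1).factorial : ℝ) ≠ 0 := Nat.cast_ne_zero.2 (Nat.factorial_ne_zero _)
  have h8 : ((j+r).factorial : ℝ) ≠ 0 := Nat.cast_ne_zero.2 (Nat.factorial_ne_zero _)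
  field_simp

lemma termEq (t n i δ j : ℕ) (hδ1 : 1 ≤ δ) (hδt : δ ≤ t) (hj : j < δ)
    (hi1 : t + 2 ≤ i) (hi2 : i + t + 2 ≤ n) :
    (((ell i δ j : ℝ) + 1) / n) * Atil t n (ell i δ j + 1) * V n i δ j
    = if i % 2 = δ % 2 then
        ((n:ℝ)+1)^(-(t:ℤ)) * (Nat.choose i (δ-1-j) : ℝ) * (Nat.choose (n-1-i) j : ℝ)
      else 0 := by
  obtain ⟨p, a, r, rfl, rfl, rfl⟩ :
      ∃ p a r, i = p+a+j+1 ∧ δ = a+j+1 ∧ n = p+a+2*j+r+2 :=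
    ⟨i - δ, δ - 1 - j, n - i - j - 1, by omega, by omega, by omega⟩
  have hell : ell (p+a+j+1) (a+j+1) j = p+2*j+1 := by unfold ell; omega
  rw [hell]
  by_cases hp : p % 2 = 0
  · rw [if_pos (show (p+a+j+1) % 2 = (a+j+1) % 2 by omega)]
    unfold Atil Ahat V
    rw [if_pos (show (p+2*j+1+1) % 2 = 0 by omega), hell,
      show p+2*j+1-j = p+j+1 from by omega,
      show p+a+2*j+r+2 - (p+2*j+1) - 1 = a+r from by omega,
      show a+j+1-1-j = a from by omega,
      show p+a+2*j+r+2-1-(p+a+j+1) = j+r from by omega,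
      show p+a+2*j+r+2-1 = p+a+2*j+r+1 from by omega]
    have h2 : (p+a+2*j+r+2) * Nat.choose (p+a+2*j+r+1) (p+2*j+1)
        = Nat.choose (p+a+2*j+r+2) (p+2*j+2) * (p+2*j+2) := by
      simpa [Nat.succ_eq_add_one] using Nat.add_one_mul_choose_eq (p+a+2*j+r+1) (p+2*j+1)
    have hc1 : ((p+a+2*j+r+2 : ℕ) : ℝ) * (Nat.choose (p+a+2*j+r+1) (p+2*j+1) : ℝ)
        = (Nat.choose (p+a+2*j+r+2) (p+2*j+2) : ℝ) * ((p+2*j+2 : ℕ) : ℝ) := by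
      exact_mod_cast h2
    have hKey := key p a j r
    have hn0 : ((p+a+2*j+r+2 : ℕ) : ℝ) ≠ 0 := by positivity
    have hC4 : (Nat.choose (p+a+2*j+r+1) (p+a+j+1) : ℝ) ≠ 0 :=
      Nat.cast_ne_zero.2 (Nat.choose_pos (by omega)).ne'
    have hz : ((p:ℝ)+(a:ℝ)+2*(j:ℝ)+(r:ℝ)+2+1) ≠ 0 := by positivity
    push_cast at hc1 hKey hn0 ⊢
    field_simp
    rw [show p+2*j+1+1 = p+2*j+2 from by omega]
    linear_combination
      (-((Nat.choose (p+2*j+1) (p+j+1) : ℝ) * (Nat.choose (a+r) a : ℝ))) * hc1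
      + ((p:ℝ)+(a:ℝ)+2*(j:ℝ)+(r:ℝ)+2) * hKey
  · rw [if_neg (show ¬ (p+a+j+1) % 2 = (a+j+1) % 2 by omega)]
    unfold Atil
    rw [if_neg (show ¬ (p+2*j+1+1) % 2 = 0 by omega)]
    ring

lemma vdm (m q k : ℕ) :
    ∑ j ∈ range (k+1), Nat.choose q j * Nat.choose m (k-j) = Nat.choose (q+m) k := by
  rw [Nat.add_choose_eq, Nat.sum_antidiagonal_eq_sum_range_succ
    (fun x y => Nat.choose q x * Nat.choose m y)]

lemma innerEq (t n i δ : ℕ) (hδ1 : 1 ≤ δ) (hδt : δ ≤ t)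
    (hi1 : t + 2 ≤ i) (hi2 : i + t + 2 ≤ n) :
    ∑ j ∈ range δ, (((ell i δ j : ℝ) + 1) / n) * Atil t n (ell i δ j + 1) * V n i δ j
    = if i % 2 = δ % 2 then
        ((n:ℝ)+1)^(-(t:ℤ)) * (Nat.choose (n-1) (δ-1) : ℝ) else 0 := by
  rw [Finset.sum_congr rfl (fun j hj => termEq t n i δ j hδ1 hδt (mem_range.1 hj) hi1 hi2)]
  by_cases hpar : i % 2 = δ % 2
  · simp only [if_pos hpar]
    have hsum : ∑ j ∈ range δ,
        ((n:ℝ)+1)^(-(t:ℤ)) * (Nat.choose i (δ-1-j) : ℝ) * (Nat.choose (n-1-i) j : ℝ)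
        = ((n:ℝ)+1)^(-(t:ℤ)) *
          ((∑ j ∈ range δ, Nat.choose (n-1-i) j * Nat.choose i (δ-1-j) : ℕ) : ℝ) := by
      rw [Nat.cast_sum, Finset.mul_sum]
      refine Finset.sum_congr rfl fun j _ => ?_
      push_cast
      ring
    rw [hsum, show δ = (δ-1)+1 from by omega]
    simp only [Nat.add_sub_cancel]
    rw [vdm i (n-1-i) (δ-1), show n-1-i+i = n-1 from by omega]
  · simp [hpar]

lemma QtilEq (t n i : ℕ) (ht : 2 ≤ t) (hi1 : t + 2 ≤ i) (hi2 : i + t + 2 ≤ n)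
    (hpar : i % 2 = t % 2) :
    Qtil t n i = ∑ δ ∈ Icc 1 t,
      (if t % 2 = δ % 2 then ((n:ℝ)+1)^(-(t:ℤ)) * (Nat.choose (n-1) (δ-1) : ℝ) else 0) := by
  rw [Qtil, if_neg (by omega)]
  refine Finset.sum_congr rfl fun δ hδ => ?_
  rw [mem_Icc] at hδ
  rw [innerEq t n i δ hδ.1 hδ.2 hi1 hi2, hpar]

lemma tendsto_div_add_one (c : ℝ) :
    Tendsto (fun n : ℕ => ((n:ℝ) + c) / ((n:ℝ) + 1)) atTop (nhds 1) := by
  have hden : Tendsto (fun n : ℕ => (n:ℝ) + 1) atTop atTop :=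
    tendsto_atTop_add_const_right atTop 1 tendsto_natCast_atTop_atTop
  have h0 : Tendsto (fun n : ℕ => (c - 1) / ((n:ℝ) + 1)) atTop (nhds 0) :=
    tendsto_const_nhds.div_atTop hden
  have := h0.const_add 1
  simp only [add_zero] at this
  refine this.congr fun n => ?_
  have hne : ((n:ℝ) + 1) ≠ 0 := by positivity
  field_simp
  ring

lemma core (t k : ℕ) (hk : k + 1 ≤ t) :
    Tendsto (fun n : ℕ => (n:ℝ) * (((n:ℝ)+1)^(-(t:ℤ)) * (Nat.choose (n-1) k : ℝ))) atTop
      (nhds (if k + 1 = t then 1 / (Nat.factorial k : ℝ) else 0)) := by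
  obtain ⟨d, hd⟩ : ∃ d, t = k + 1 + d := ⟨t - (k+1), by omega⟩
  have hden : Tendsto (fun n : ℕ => (n:ℝ) + 1) atTop atTop :=
    tendsto_atTop_add_const_right atTop 1 tendsto_natCast_atTop_atTop
  have hA : Tendsto (fun n : ℕ => (n:ℝ) / ((n:ℝ) + 1)) atTop (nhds 1) := by
    have := tendsto_div_add_one 0
    simpa using this
  have hB : Tendsto (fun n : ℕ => ∏ m ∈ range k, (((n:ℝ) - 1 - m) / ((n:ℝ) + 1)))
      atTop (nhds 1) := by
    have := tendsto_finset_prod (f := fun (m : ℕ) (n : ℕ) => ((n:ℝ) - 1 - m) / ((n:ℝ) + 1))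
      (a := fun _ => (1:ℝ)) (range k) (fun m _ => by
        have := tendsto_div_add_one (-(1 + m))
        refine this.congr fun n => ?_
        ring_nf)
    simpa using this
  have hD : Tendsto (fun n : ℕ => (1 / ((n:ℝ) + 1))^d) atTop
      (nhds (if d = 0 then 1 else 0)) := by
    rcases Nat.eq_zero_or_pos d with h | h
    · subst h
      simp only [pow_zero, if_pos rfl]
      exact tendsto_const_nhds
    · have h1 : Tendsto (fun n : ℕ => 1 / ((n:ℝ) + 1)) atTop (nhds 0) :=
        tendsto_const_nhds.div_atTop hden
      have h2 := h1.pow d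
      rw [zero_pow (by omega : d ≠ 0)] at h2
      rw [if_neg (by omega : ¬ d = 0)]
      exact h2
  have hlim := ((hA.mul hB).mul hD).mul
    (tendsto_const_nhds (x := 1 / (Nat.factorial k : ℝ)) (f := atTop (α := ℕ)))
  have hval : (1 * 1 * (if d = 0 then (1:ℝ) else 0)) * (1 / (Nat.factorial k : ℝ))
      = if k + 1 = t then 1 / (Nat.factorial k : ℝ) else 0 := by
    subst hd
    rcases Nat.eq_zero_or_pos d with h | h
    · simp [h]
    · rw [if_neg (by omega), if_neg (by omega)]; ring
  rw [hval] at hlim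
  refine hlim.congr' ?_
  filter_upwards [eventually_ge_atTop (k + 2)] with n hn
  have hne : ((n:ℝ) + 1) ≠ 0 := by positivity
  have hfac : ((Nat.factorial k : ℕ) : ℝ) ≠ 0 := Nat.cast_ne_zero.2 (Nat.factorial_ne_zero _)
  have hch : (Nat.factorial k : ℝ) * (Nat.choose (n-1) k : ℝ)
      = ∏ m ∈ range k, ((n:ℝ) - 1 - m) := by
    have h1 : (n-1).descFactorial k = Nat.factorial k * Nat.choose (n-1) k :=
      Nat.descFactorial_eq_factorial_mul_choose _ _
    have h2 : (n-1).descFactorial k = ∏ m ∈ range k, (n - 1 - m) :=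
      Nat.descFactorial_eq_prod_range _ _
    have h3 : ((∏ m ∈ range k, (n - 1 - m) : ℕ) : ℝ) = ∏ m ∈ range k, ((n:ℝ) - 1 - m) := by
      rw [Nat.cast_prod]
      refine Finset.prod_congr rfl fun m hm => ?_
      rw [mem_range] at hm
      have : (1 : ℕ) + m ≤ n := by omega
      push_cast [Nat.sub_sub, Nat.cast_sub this]
      ring
    rw [← h3, ← h2, h1]
    push_cast
    ring
  have hzpow : ((n:ℝ)+1)^(-(t:ℤ)) = (((n:ℝ)+1)^t)⁻¹ := by
    rw [zpow_neg, zpow_natCast]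
  rw [hzpow]
  rw [Finset.prod_div_distrib, Finset.prod_const]
  have hpow : ((n:ℝ)+1)^t = ((n:ℝ)+1)^(k+1) * ((n:ℝ)+1)^d := by
    rw [hd, pow_add]
  rw [hpow]
  field_simp
  have hinv : (1/((n:ℝ)+1))^d * ((n:ℝ)+1)^d = 1 := by
    rw [← mul_pow, one_div, inv_mul_cancel₀ hne, one_pow]
  rw [card_range]
  linear_combination ((n:ℝ) * (∏ m ∈ range k, ((n:ℝ) - 1 - m)) * ((n:ℝ)+1)^(k+1)) * hinv
    - ((n:ℝ) * ((n:ℝ)+1)^(k+1)) * hch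

/-- for `t ≥ 2` and any sequence `i_n` with `t+2 ≤ i_n ≤ n−t−2` and
`i_n + t` even, `lim_{n→∞} n·Q̃_n(i_n) = 1/(t−1)!`. -/
theorem stmt4 (t : ℕ) (ht : 2 ≤ t) (i : ℕ → ℕ)
    (hi : ∀ n, 4 * t + 4 < n → t + 2 ≤ i n ∧ i n ≤ n - t - 2)
    (heven : ∀ n, 4 * t + 4 < n → Even (i n + t)) :
    Tendsto (fun n : ℕ => (n : ℝ) * Qtil t n (i n)) atTop
      (nhds (1 / (Nat.factorial (t - 1) : ℝ))) := by
  have hG : Tendsto (fun n : ℕ => ∑ δ ∈ Icc 1 t,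
      (if t % 2 = δ % 2 then (n:ℝ) * (((n:ℝ)+1)^(-(t:ℤ)) * (Nat.choose (n-1) (δ-1) : ℝ))
        else 0)) atTop (nhds (1 / (Nat.factorial (t - 1) : ℝ))) := by
    have hsumval : (1 / (Nat.factorial (t - 1) : ℝ))
        = ∑ δ ∈ Icc 1 t, (if δ = t then 1 / (Nat.factorial (t - 1) : ℝ) else 0) := by
      rw [Finset.sum_ite_eq' (Icc 1 t) t (fun _ => 1 / (Nat.factorial (t - 1) : ℝ))]
      rw [if_pos (by rw [mem_Icc]; omega)]
    rw [hsumval]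
    refine tendsto_finset_sum _ fun δ hδ => ?_
    rw [mem_Icc] at hδ
    by_cases hpar : t % 2 = δ % 2
    · simp only [if_pos hpar]
      have hcore := core t (δ-1) (by omega)
      have : (if (δ-1) + 1 = t then 1 / (Nat.factorial (δ-1) : ℝ) else 0)
          = (if δ = t then 1 / (Nat.factorial (t - 1) : ℝ) else 0) := by
        split_ifs with h1 h2 h2
        · rw [show δ - 1 = t - 1 from by omega]
        · omega
        · omega
        · rfl
      rw [this] at hcore
      exact hcore
    · simp only [if_neg hpar, if_neg (show ¬ δ = t from fun h => hpar (by rw [h]))]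
      exact tendsto_const_nhds
  refine hG.congr' ?_
  filter_upwards [eventually_gt_atTop (4*t+4)] with n hn
  obtain ⟨h1, h2⟩ := hi n hn
  have h2' : i n + t + 2 ≤ n := by omega
  have hpar : i n % 2 = t % 2 := by
    obtain ⟨r, hr⟩ := heven n hn
    omega
  rw [QtilEq t n (i n) ht h1 h2' hpar, Finset.mul_sum]
  refine Finset.sum_congr rfl fun δ hδ => ?_
  split_ifs <;> simp
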